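/- Let α, h, d be positive real constants with d < h/α². Then the equation (1 − e^{−αx})·(h − d·α²) = α·h·x·e^{−αx} has exactly one solution x* in (0,∞); moreover, for any K > 0, the function H(x) := ( K·(1 − e^{−αx}) − K·α²·d/h ) / (α·x − 1 + e^{−αx}) is strictly increasing on (0, x*] and strictly decreasing on [x*, ∞), so that H attains its maximum over (0,∞) uniquely at x*. -/

import Mathlib

set_option maxHeartbeats 1000000


/-- The dual functional of the fluid-queue example expressed through the
threshold: `H(x) = (K(1 - e^{-αx}) - Kα²d/h) / (αx - 1 + e^{-αx})`. -/
noncomputable def Hfun (α h d K x : ℝ) : ℝ :=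
  (K * (1 - Real.exp (-α * x)) - K * α ^ 2 * d / h) /
    (α * x - 1 + Real.exp (-α * x))

lemma Dpos {u : ℝ} (hu : 0 < u) : 0 < u - 1 + Real.exp (-u) := by
  have := Real.add_one_lt_exp (show -u ≠ 0 by intro hcon; linarith)
  linarith

lemma numId (α h d K x : ℝ) (hh : h ≠ 0) :
    K * α * Real.exp (-α * x) * (α * x - 1 + Real.exp (-α * x))
      - (K * (1 - Real.exp (-α * x)) - K * α ^ 2 * d / h)
        * (α - α * Real.exp (-α * x))
    = K * α * (-(Real.exp (-α * x)
        * ((h - d * α ^ 2) * (Real.exp (α * x) - 1) - h * (α * x)))) / h := by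
  have hE : Real.exp (-α * x) * Real.exp (α * x) = 1 := by
    rw [← Real.exp_add]; ring_nf; exact Real.exp_zero
  have hE' : Real.exp (-(α * x)) * Real.exp (α * x) = 1 := by
    rw [← neg_mul]; exact hE
  field_simp
  linear_combination (K * α * h - K * α ^ 3 * d) * hE'

/-- Let `α, h, d > 0` with `d < h/α²`.  Then the equation
`(1 - e^{-αx})(h - dα²) = αhx e^{-αx}` has exactly one solution `x* ∈ (0,∞)`;
moreover, for any `K > 0`, the function `H` is strictly increasing on `(0, x*]`
and strictly decreasing on `[x*, ∞)`, so `H` attains its maximum over `(0,∞)`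
uniquely at `x*`. -/
theorem stmt15 (α h d : ℝ) (hα : 0 < α) (hh : 0 < h) (hd : 0 < d)
    (hdh : d < h / α ^ 2) :
    (∃! x : ℝ, 0 < x ∧
      (1 - Real.exp (-α * x)) * (h - d * α ^ 2) = α * h * x * Real.exp (-α * x)) ∧
    ∀ xs : ℝ,
      (0 < xs ∧
        (1 - Real.exp (-α * xs)) * (h - d * α ^ 2)
          = α * h * xs * Real.exp (-α * xs)) →
      ∀ K : ℝ, 0 < K →
        StrictMonoOn (Hfun α h d K) (Set.Ioc 0 xs) ∧
        StrictAntiOn (Hfun α h d K) (Set.Ici xs) ∧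
        ∀ y : ℝ, 0 < y → y ≠ xs → Hfun α h d K y < Hfun α h d K xs := by
  have hα2 : (0:ℝ) < α ^ 2 := by positivity
  have hc : 0 < h - d * α ^ 2 := by
    have := (lt_div_iff₀ hα2).mp hdh; linarith
  have hch : h - d * α ^ 2 < h := by nlinarith
  -- the auxiliary function ψ
  set ψ : ℝ → ℝ := fun t =>
    (h - d * α ^ 2) * (Real.exp t - 1) - h * t with hψdef
  have hψ0 : ψ 0 = 0 := by simp [hψdef]
  have hψderiv : ∀ t : ℝ, HasDerivAt ψ ((h - d * α ^ 2) * Real.exp t - h) t := by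
    intro t
    have := ((Real.hasDerivAt_exp t).sub_const 1).const_mul (h - d * α ^ 2)
    exact (this.sub ((hasDerivAt_id t).const_mul h)).congr_deriv (by ring)
  have hψcont : Continuous ψ := by fun_prop
  clear_value ψ
  set t0 : ℝ := Real.log (h / (h - d * α ^ 2)) with ht0def
  have ht0pos : 0 < t0 := Real.log_pos (by rw [lt_div_iff₀ hc]; linarith)
  have hexpt0 : Real.exp t0 = h / (h - d * α ^ 2) := Real.exp_log (by positivity)
  clear_value t0
  -- ψ strictly decreasing on [0, t0]
  have hanti : StrictAntiOn ψ (Set.Icc 0 t0) := by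
    apply strictAntiOn_of_deriv_neg (convex_Icc 0 t0) hψcont.continuousOn
    intro t ht
    rw [interior_Icc] at ht
    rw [(hψderiv t).deriv]
    have h1 : Real.exp t < Real.exp t0 := Real.exp_lt_exp.mpr ht.2
    rw [hexpt0] at h1
    have : (h - d * α ^ 2) * Real.exp t < h := by
      calc (h - d * α ^ 2) * Real.exp t
          < (h - d * α ^ 2) * (h / (h - d * α ^ 2)) := by nlinarith
        _ = h := by field_simp
    linarith
  -- ψ strictly increasing on [t0, ∞)
  have hmono : StrictMonoOn ψ (Set.Ici t0) := by
    apply strictMonoOn_of_deriv_pos (convex_Ici t0) hψcont.continuousOn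
    intro t ht
    rw [interior_Ici] at ht
    rw [(hψderiv t).deriv]
    have h1 : Real.exp t0 < Real.exp t := Real.exp_lt_exp.mpr ht
    rw [hexpt0] at h1
    have : h < (h - d * α ^ 2) * Real.exp t := by
      calc h = (h - d * α ^ 2) * (h / (h - d * α ^ 2)) := by field_simp
        _ < (h - d * α ^ 2) * Real.exp t := by nlinarith
    linarith
  have hψt0 : ψ t0 < 0 := by
    have := hanti (Set.left_mem_Icc.mpr ht0pos.le)
      (Set.mem_Icc.mpr ⟨ht0pos.le, le_rfl⟩) ht0pos
    rwa [hψ0] at this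
  -- a point where ψ is positive
  set T : ℝ := max t0 (4 * h / (h - d * α ^ 2)) + 1 with hTdef
  have hTt0 : t0 < T := by
    have := le_max_left t0 (4 * h / (h - d * α ^ 2)); simp only [hTdef]; linarith
  have hT4 : 4 * h / (h - d * α ^ 2) < T := by
    have := le_max_right t0 (4 * h / (h - d * α ^ 2)); simp only [hTdef]; linarith
  clear_value T
  have hTpos : 0 < T := lt_trans ht0pos hTt0
  have hψT : 0 < ψ T := by
    have hsq : (1 + T / 2) ^ 2 ≤ Real.exp T := by
      have h1 : 1 + T / 2 ≤ Real.exp (T / 2) := by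
        linarith [Real.add_one_le_exp (T / 2)]
      have h2 : Real.exp (T / 2) * Real.exp (T / 2) = Real.exp T := by
        rw [← Real.exp_add]; ring_nf
      nlinarith [Real.exp_pos (T / 2), h1, h2, hTpos]
    have hcT : 4 * h < (h - d * α ^ 2) * T := by
      have := (div_lt_iff₀ hc).mp hT4; linarith
    have e1 : T + T ^ 2 / 4 ≤ Real.exp T - 1 := by nlinarith
    have e2 : (h - d * α ^ 2) * (T + T ^ 2 / 4)
        ≤ (h - d * α ^ 2) * (Real.exp T - 1) :=
      mul_le_mul_of_nonneg_left e1 hc.le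
    have e3 : h * T < (h - d * α ^ 2) * (T + T ^ 2 / 4) := by
      nlinarith [mul_pos (show (0:ℝ) < (h - d * α ^ 2) * T - 4 * h by linarith)
        hTpos, mul_pos hc hTpos]
    simp only [hψdef]
    linarith
  -- the zero of ψ on [t0, T]
  obtain ⟨ts, hts_mem, hts⟩ : ∃ t ∈ Set.Icc t0 T, ψ t = 0 := by
    have := intermediate_value_Icc hTt0.le hψcont.continuousOn
      (show (0:ℝ) ∈ Set.Icc (ψ t0) (ψ T) from ⟨hψt0.le, hψT.le⟩)
    obtain ⟨t, ht, htt⟩ := this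
    exact ⟨t, ht, htt⟩
  have hts_gt : t0 < ts := by
    rcases lt_or_eq_of_le hts_mem.1 with h' | h'
    · exact h'
    · exfalso; rw [← h'] at hts; linarith
  have htspos : 0 < ts := lt_trans ht0pos hts_gt
  -- sign of ψ
  have hneg : ∀ t : ℝ, 0 < t → t < ts → ψ t < 0 := by
    intro t ht hlt
    rcases le_or_gt t t0 with h' | h'
    · rcases lt_or_eq_of_le h' with h'' | h''
      · have := hanti (Set.mem_Icc.mpr ⟨le_rfl, ht0pos.le⟩)
          (Set.mem_Icc.mpr ⟨ht.le, h'⟩) ht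
        rwa [hψ0] at this
      · rw [h'']; exact hψt0
    · have := hmono (Set.mem_Ici.mpr h'.le) (Set.mem_Ici.mpr hts_mem.1) hlt
      rwa [hts] at this
  have hpos : ∀ t : ℝ, ts < t → 0 < ψ t := by
    intro t hlt
    have := hmono (Set.mem_Ici.mpr hts_mem.1)
      (Set.mem_Ici.mpr (le_trans hts_mem.1 hlt.le)) hlt
    rwa [hts] at this
  -- equation ↔ ψ (α x) = 0
  have hequiv : ∀ x : ℝ, 0 < x →
      ((1 - Real.exp (-α * x)) * (h - d * α ^ 2) = α * h * x * Real.exp (-α * x)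
        ↔ ψ (α * x) = 0) := by
    intro x hx
    have hE : Real.exp (-α * x) * Real.exp (α * x) = 1 := by
      rw [← Real.exp_add]; ring_nf; exact Real.exp_zero
    have hEpos := Real.exp_pos (-α * x)
    have hkey : (1 - Real.exp (-α * x)) * (h - d * α ^ 2)
        - α * h * x * Real.exp (-α * x) = ψ (α * x) * Real.exp (-α * x) := by
      simp only [hψdef]
      linear_combination (-(h - d * α ^ 2)) * hE
    constructor
    · intro heq
      have h0 : ψ (α * x) * Real.exp (-α * x) = 0 := by
        rw [← hkey]; linarith
      rcases mul_eq_zero.mp h0 with h' | h'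
      · exact h'
      · exact absurd h' (ne_of_gt hEpos)
    · intro heq
      have := hkey
      rw [heq, zero_mul] at this
      linarith
  set xs0 : ℝ := ts / α with hxs0def
  have hxs0pos : 0 < xs0 := by positivity
  have hαxs0 : α * xs0 = ts := by rw [hxs0def]; field_simp
  clear_value xs0
  constructor
  · -- existence and uniqueness
    refine ⟨xs0, ⟨hxs0pos, ?_⟩, ?_⟩
    · rw [hequiv xs0 hxs0pos, hαxs0]; exact hts
    · rintro y ⟨hy, hyeq⟩
      rw [hequiv y hy] at hyeq
      by_contra hne
      rcases lt_or_gt_of_ne hne with h' | h'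
      · have : α * y < ts := by rw [← hαxs0]; nlinarith
        exact absurd hyeq (ne_of_lt (hneg _ (by positivity) this))
      · have : ts < α * y := by rw [← hαxs0]; nlinarith
        exact absurd hyeq (ne_of_gt (hpos _ this))
  · rintro xs ⟨hxs, hxseq⟩ K hK
    rw [hequiv xs hxs] at hxseq
    have hαxs : α * xs = ts := by
      by_contra hne
      rcases lt_or_gt_of_ne hne with h' | h'
      · exact absurd hxseq (ne_of_lt (hneg _ (by positivity) h'))
      · exact absurd hxseq (ne_of_gt (hpos _ h'))
    -- derivative of Hfun
    have hHderiv : ∀ x : ℝ, 0 < x →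
        HasDerivAt (Hfun α h d K)
          ((K * α * Real.exp (-α * x) * (α * x - 1 + Real.exp (-α * x))
            - (K * (1 - Real.exp (-α * x)) - K * α ^ 2 * d / h)
              * (α - α * Real.exp (-α * x)))
            / (α * x - 1 + Real.exp (-α * x)) ^ 2) x := by
      intro x hx
      have hDne : α * x - 1 + Real.exp (-α * x) ≠ 0 := by
        have := Dpos (show 0 < α * x by positivity)
        intro hcon; rw [show -(α * x) = -α * x by ring] at this; linarith
      have hexp : HasDerivAt (fun y => Real.exp (-α * y))
          (Real.exp (-α * x) * (-α)) x := by
        have h1 : HasDerivAt (fun y : ℝ => -α * y) (-α) x := by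
          simpa using (hasDerivAt_id x).const_mul (-α)
        exact (Real.hasDerivAt_exp (-α * x)).comp x h1
      have hN : HasDerivAt (fun y => K * (1 - Real.exp (-α * y)) - K * α ^ 2 * d / h)
          (K * α * Real.exp (-α * x)) x := by
        have := (((hasDerivAt_const x (1:ℝ)).sub hexp).const_mul K).sub_const
          (K * α ^ 2 * d / h)
        exact this.congr_deriv (by ring)
      have hD : HasDerivAt (fun y => α * y - 1 + Real.exp (-α * y))
          (α - α * Real.exp (-α * x)) x := by
        have h2 := (((hasDerivAt_id x).const_mul α).sub_const 1).add hexp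
        simp only [id_eq] at h2
        exact h2.congr_deriv (by ring)
      exact hN.div hD hDne
    have hDpos' : ∀ x : ℝ, 0 < x → 0 < α * x - 1 + Real.exp (-α * x) := by
      intro x hx
      have := Dpos (show 0 < α * x by positivity)
      rw [show -(α * x) = -α * x by ring] at this; exact this
    -- sign of the numerator
    have hnum : ∀ x : ℝ, 0 < x →
        K * α * Real.exp (-α * x) * (α * x - 1 + Real.exp (-α * x))
          - (K * (1 - Real.exp (-α * x)) - K * α ^ 2 * d / h)
            * (α - α * Real.exp (-α * x))
        = K * α * (-(Real.exp (-α * x) * ψ (α * x))) / h := by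
      intro x hx
      simp only [hψdef]
      exact numId α h d K x hh.ne'
    have hderivpos : ∀ x : ℝ, 0 < x → x < xs →
        0 < deriv (Hfun α h d K) x := by
      intro x hx hlt
      rw [(hHderiv x hx).deriv, hnum x hx]
      have hψneg : ψ (α * x) < 0 := hneg _ (by positivity)
        (by rw [← hαxs]; nlinarith)
      have h1 : 0 < -(Real.exp (-α * x) * ψ (α * x)) := by
        have := Real.exp_pos (-α * x); nlinarith
      have h2 := hDpos' x hx
      positivity
    have hderivneg : ∀ x : ℝ, xs < x →
        deriv (Hfun α h d K) x < 0 := by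
      intro x hlt
      have hx : 0 < x := lt_trans hxs hlt
      rw [(hHderiv x hx).deriv, hnum x hx]
      have hψp : 0 < ψ (α * x) := hpos _ (by rw [← hαxs]; nlinarith)
      have h1 : -(Real.exp (-α * x) * ψ (α * x)) < 0 := by
        have := Real.exp_pos (-α * x); nlinarith
      apply div_neg_of_neg_of_pos
      apply div_neg_of_neg_of_pos
      · exact mul_neg_of_pos_of_neg (mul_pos hK hα) h1
      · exact hh
      · have := hDpos' x hx; positivity
    have hcont : ∀ x : ℝ, 0 < x → ContinuousAt (Hfun α h d K) x := by
      intro x hx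
      exact (hHderiv x hx).continuousAt
    have hSM : StrictMonoOn (Hfun α h d K) (Set.Ioc 0 xs) := by
      apply strictMonoOn_of_deriv_pos (convex_Ioc 0 xs)
      · exact fun x hx => (hcont x hx.1).continuousWithinAt
      · intro x hx
        rw [interior_Ioc] at hx
        exact hderivpos x hx.1 hx.2
    have hSA : StrictAntiOn (Hfun α h d K) (Set.Ici xs) := by
      apply strictAntiOn_of_deriv_neg (convex_Ici xs)
      · exact fun x hx => (hcont x (lt_of_lt_of_le hxs hx)).continuousWithinAt
      · intro x hx
        rw [interior_Ici] at hx
        exact hderivneg x hx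
    refine ⟨hSM, hSA, ?_⟩
    intro y hy hyne
    rcases lt_or_gt_of_ne hyne with h' | h'
    · exact hSM (Set.mem_Ioc.mpr ⟨hy, h'.le⟩)
        (Set.mem_Ioc.mpr ⟨hxs, le_rfl⟩) h'
    · exact hSA (Set.mem_Ici.mpr le_rfl) (Set.mem_Ici.mpr h'.le) h'
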